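/- Let X be a finite nonempty set, P ⊆ X a subset, and k an integer with 1 ≤ k ≤ |X|. Set φ := |P|/|X| and let δ ∈ [0, φ] be a real number. If S is chosen uniformly at random among all k-element subsets of X, then Pr[|P ∩ S| < δ·k] ≤ exp(−2k(φ − δ)²). -/

import Mathlib

open Real Set Finset


lemma bern_pos (a : ℝ) (ha0 : 0 ≤ a) (ha1 : a ≤ 1) (x : ℝ) :
    0 < 1 - a + a * Real.exp x := by
  rcases eq_or_lt_of_le ha0 with h | h
  · simp [← h]
  · nlinarith [Real.exp_pos x]

lemma bern_mgf (a : ℝ) (ha0 : 0 ≤ a) (ha1 : a ≤ 1) {h : ℝ} (hh : 0 ≤ h) :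
    1 - a + a * Real.exp h ≤ Real.exp (a * h + h ^ 2 / 8) := by
  set D : ℝ → ℝ := fun x => 1 - a + a * Real.exp x with hD
  have hDpos : ∀ x, 0 < D x := bern_pos a ha0 ha1
  set f1 : ℝ → ℝ := fun x => a + x / 4 - a * Real.exp x / D x with hf1
  set f : ℝ → ℝ := fun x => a * x + x ^ 2 / 8 - Real.log (D x) with hf
  have hDd : ∀ x : ℝ, HasDerivAt D (a * Real.exp x) x := fun x =>
    ((Real.hasDerivAt_exp x).const_mul a).const_add (1 - a)
  have hfd : ∀ x : ℝ, HasDerivAt f (f1 x) x := by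
    intro x
    have hlog : HasDerivAt (fun y => Real.log (D y)) ((D x)⁻¹ * (a * Real.exp x)) x :=
      (Real.hasDerivAt_log (hDpos x).ne').comp x (hDd x)
    have h1 := ((hasDerivAt_id x).const_mul a).add ((hasDerivAt_pow 2 x).div_const 8)
    have h2 := h1.sub hlog
    convert h2 using 1
    · rfl
    · rfl
    · rfl
    have hDx : D x = 1 - a + a * Real.exp x := rfl
    simp only [hf1, id, hDx]
    have := (hDpos x); rw [hDx] at this
    field_simp
    ring
  have hf1d : ∀ x : ℝ, HasDerivAt f1
      (1 / 4 - a * Real.exp x * (1 - a) / (D x) ^ 2) x := by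
    intro x
    have hq : HasDerivAt (fun y => a * Real.exp y / D y)
        ((a * Real.exp x * D x - a * Real.exp x * (a * Real.exp x)) / (D x) ^ 2) x :=
      ((Real.hasDerivAt_exp x).const_mul a).div (hDd x) (hDpos x).ne'
    have h1 : HasDerivAt (fun y : ℝ => a + y / 4) (1 / 4) x :=
      ((hasDerivAt_id x).div_const 4).const_add a
    have h3 := h1.sub hq
    convert h3 using 2
    · rfl
    · rfl
    · rfl
    have hDx : D x = 1 - a + a * Real.exp x := rfl
    rw [hDx]
    ring
  have hf1mono : MonotoneOn f1 (Ici (0:ℝ)) := by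
    apply monotoneOn_of_deriv_nonneg (convex_Ici 0)
      (fun x _ => ((hf1d x).differentiableAt).continuousAt.continuousWithinAt)
      (fun x _ => ((hf1d x).differentiableAt).differentiableWithinAt)
    intro x _
    rw [(hf1d x).deriv]
    have hDx : D x = 1 - a + a * Real.exp x := rfl
    rw [hDx]
    have hpos : (0:ℝ) < (1 - a + a * Real.exp x) ^ 2 := by
      have := bern_pos a ha0 ha1 x; positivity
    rw [sub_nonneg, div_le_iff₀ hpos]
    nlinarith [sq_nonneg (1 - a - a * Real.exp x)]
  have hf10 : f1 0 = 0 := by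
    simp [hf1, hD, Real.exp_zero]
  have hf1nonneg : ∀ x ∈ Ici (0:ℝ), 0 ≤ f1 x := by
    intro x hx
    rw [← hf10]
    exact hf1mono (self_mem_Ici) hx hx
  have hfmono : MonotoneOn f (Ici (0:ℝ)) := by
    apply monotoneOn_of_deriv_nonneg (convex_Ici 0)
      (fun x _ => ((hfd x).differentiableAt).continuousAt.continuousWithinAt)
      (fun x _ => ((hfd x).differentiableAt).differentiableWithinAt)
    intro x hx
    rw [(hfd x).deriv]
    exact hf1nonneg x (interior_subset hx)
  have hf0 : f 0 = 0 := by simp [hf, hD, Real.exp_zero]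
  have : 0 ≤ f h := by rw [← hf0]; exact hfmono self_mem_Ici hh hh
  have hlog : Real.log (D h) ≤ a * h + h ^ 2 / 8 := by
    simp only [hf] at this; linarith
  calc D h = Real.exp (Real.log (D h)) := (Real.exp_log (hDpos h)).symm
    _ ≤ _ := Real.exp_le_exp.2 hlog


-- C(q,j) * n^j ≤ C(n,j) * q^j  for q ≤ n
lemma choose_pow_le {n q j : ℕ} (hq : q ≤ n) :
    q.choose j * n ^ j ≤ n.choose j * q ^ j := by
  have key : q.descFactorial j * n ^ j ≤ n.descFactorial j * q ^ j := by
    rw [Nat.descFactorial_eq_prod_range, Nat.descFactorial_eq_prod_range]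
    have hn : n ^ j = ∏ _i ∈ range j, n := by simp
    have hq' : q ^ j = ∏ _i ∈ range j, q := by simp
    rw [hn, hq', ← Finset.prod_mul_distrib, ← Finset.prod_mul_distrib]
    apply Finset.prod_le_prod'
    intro i _
    calc (q - i) * n = q * n - i * n := Nat.sub_mul q i n
      _ ≤ q * n - i * q := Nat.sub_le_sub_left (Nat.mul_le_mul_left i hq) _
      _ = (n - i) * q := by rw [Nat.sub_mul, Nat.mul_comm q n]
  have e1 : q.descFactorial j = j.factorial * q.choose j := Nat.descFactorial_eq_factorial_mul_choose q j
  have e2 : n.descFactorial j = j.factorial * n.choose j := Nat.descFactorial_eq_factorial_mul_choose n j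
  rw [e1, e2] at key
  have hfac : 0 < j.factorial := Nat.factorial_pos j
  refine Nat.le_of_mul_le_mul_left ?_ hfac
  calc j.factorial * (q.choose j * n ^ j) = j.factorial * q.choose j * n ^ j := by ring
    _ ≤ j.factorial * n.choose j * q ^ j := key
    _ = j.factorial * (n.choose j * q ^ j) := by ring

lemma card_supersets {α : Type*} [Fintype α] [DecidableEq α] (T : Finset α) (k : ℕ) :
    (((Finset.univ : Finset α).powersetCard k).filter (fun S => T ⊆ S)).card
      ≤ (Fintype.card α - T.card).choose (k - T.card) := by
  have : (((Finset.univ : Finset α).powersetCard k).filter (fun S => T ⊆ S)).card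
      ≤ ((Finset.univ \ T).powersetCard (k - T.card)).card := by
    apply Finset.card_le_card_of_injOn (fun S => S \ T)
    · intro S hS
      simp only [Finset.mem_coe, Finset.mem_filter, Finset.mem_powersetCard] at hS ⊢
      obtain ⟨⟨hSu, hSk⟩, hTS⟩ := hS
      exact ⟨Finset.sdiff_subset_sdiff hSu le_rfl, by rw [Finset.card_sdiff_of_subset hTS, hSk]⟩
    · intro S1 h1 S2 h2 he
      simp only [Finset.mem_coe, Finset.mem_filter] at h1 h2
      have e1 := Finset.sdiff_union_of_subset h1.2
      have e2 := Finset.sdiff_union_of_subset h2.2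
      simp only at he
      rw [← e1, he, e2]
  rw [Finset.card_powersetCard, Finset.card_univ_diff] at this
  exact this

lemma sum_choose_le {α : Type*} [Fintype α] [DecidableEq α] (P : Finset α) (k j : ℕ) :
    ∑ S ∈ (Finset.univ : Finset α).powersetCard k, ((S \ P).card.choose j)
      ≤ (Fintype.card α - P.card).choose j *
          ((Fintype.card α - j).choose (k - j)) := by
  classical
  have step1 : ∀ S : Finset α,
      (S \ P).card.choose j
        = (((Finset.univ \ P).powersetCard j).filter (fun T => T ⊆ S)).card := by
    intro S
    have : ((Finset.univ \ P).powersetCard j).filter (fun T => T ⊆ S)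
        = (S \ P).powersetCard j := by
      ext T
      simp only [Finset.mem_filter, Finset.mem_powersetCard, Finset.subset_sdiff]
      constructor
      · rintro ⟨⟨⟨-, hd⟩, hc⟩, hTS⟩; exact ⟨⟨hTS, hd⟩, hc⟩
      · rintro ⟨⟨hTS, hd⟩, hc⟩; exact ⟨⟨⟨Finset.subset_univ T, hd⟩, hc⟩, hTS⟩
    rw [this, Finset.card_powersetCard]
  calc ∑ S ∈ (Finset.univ : Finset α).powersetCard k, ((S \ P).card.choose j)
      = ∑ S ∈ (Finset.univ : Finset α).powersetCard k,
          ∑ T ∈ (Finset.univ \ P).powersetCard j, (if T ⊆ S then 1 else 0) := by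
        refine Finset.sum_congr rfl fun S _ => ?_
        rw [step1 S, Finset.card_filter]
    _ = ∑ T ∈ (Finset.univ \ P).powersetCard j,
          ∑ S ∈ (Finset.univ : Finset α).powersetCard k, (if T ⊆ S then 1 else 0) :=
        Finset.sum_comm
    _ = ∑ T ∈ (Finset.univ \ P).powersetCard j,
          (((Finset.univ : Finset α).powersetCard k).filter (fun S => T ⊆ S)).card := by
        refine Finset.sum_congr rfl fun T _ => ?_
        rw [Finset.card_filter]
    _ ≤ ∑ T ∈ (Finset.univ \ P).powersetCard j,
          ((Fintype.card α - j).choose (k - j)) := by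
        apply Finset.sum_le_sum
        intro T hT
        have hTc : T.card = j := (Finset.mem_powersetCard.1 hT).2
        have := card_supersets T k
        rwa [hTc] at this
    _ = (Fintype.card α - P.card).choose j * ((Fintype.card α - j).choose (k - j)) := by
        rw [Finset.sum_const, Finset.card_powersetCard, Finset.card_univ_diff, smul_eq_mul]

lemma mgf_bound {α : Type*} [Fintype α] [DecidableEq α] (P : Finset α) (k : ℕ)
    (hk : k ≤ Fintype.card α) (hn : 0 < Fintype.card α) (y : ℝ) (hy : 0 ≤ y) :
    ∑ S ∈ (Finset.univ : Finset α).powersetCard k, (1 + y) ^ (S \ P).card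
      ≤ ((Fintype.card α).choose k : ℝ)
          * (1 + ((Fintype.card α - P.card : ℕ) : ℝ) / (Fintype.card α : ℝ) * y) ^ k := by
  set n := Fintype.card α with hndef
  set q := n - P.card with hqdef
  have hn0 : (0:ℝ) < (n:ℝ) := by exact_mod_cast hn
  have expand : ∀ S ∈ (Finset.univ : Finset α).powersetCard k,
      (1 + y) ^ (S \ P).card
        = ∑ j ∈ Finset.range (k+1), ((S \ P).card.choose j : ℝ) * y ^ j := by
    intro S hS
    have hm : (S \ P).card ≤ k := by
      have h2 := (Finset.mem_powersetCard.1 hS).2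
      calc (S \ P).card ≤ S.card := Finset.card_le_card Finset.sdiff_subset
        _ = k := h2
    rw [add_comm (1:ℝ) y, add_pow,
      Finset.sum_subset (Finset.range_subset_range.2 (Nat.succ_le_succ hm))]
    · exact Finset.sum_congr rfl fun j _ => by rw [one_pow]; ring
    · intro x hx hx'
      have : (S \ P).card < x := by
        simp only [Finset.mem_range] at hx'; omega
      simp [Nat.choose_eq_zero_of_lt this]
  calc ∑ S ∈ (Finset.univ : Finset α).powersetCard k, (1 + y) ^ (S \ P).card
      = ∑ S ∈ (Finset.univ : Finset α).powersetCard k,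
          ∑ j ∈ Finset.range (k+1), ((S \ P).card.choose j : ℝ) * y ^ j :=
        Finset.sum_congr rfl expand
    _ = ∑ j ∈ Finset.range (k+1),
          ((∑ S ∈ (Finset.univ : Finset α).powersetCard k, (S \ P).card.choose j : ℕ) : ℝ)
            * y ^ j := by
        rw [Finset.sum_comm]
        exact Finset.sum_congr rfl fun j _ => by rw [← Finset.sum_mul, ← Nat.cast_sum]
    _ ≤ ∑ j ∈ Finset.range (k+1),
          ((q.choose j * ((n - j).choose (k - j)) : ℕ) : ℝ) * y ^ j := by
        apply Finset.sum_le_sum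
        intro j _
        apply mul_le_mul_of_nonneg_right _ (pow_nonneg hy j)
        exact_mod_cast sum_choose_le P k j
    _ ≤ ∑ j ∈ Finset.range (k+1),
          (n.choose k : ℝ) * (k.choose j : ℝ) * ((q:ℝ)/(n:ℝ)) ^ j * y ^ j := by
        apply Finset.sum_le_sum
        intro j hj
        have hjk : j ≤ k := by simp only [Finset.mem_range] at hj; omega
        apply mul_le_mul_of_nonneg_right _ (pow_nonneg hy j)
        have h1 : (q.choose j : ℝ) * (n:ℝ) ^ j ≤ (n.choose j : ℝ) * (q:ℝ) ^ j := by
          exact_mod_cast choose_pow_le (Nat.sub_le n P.card) (j := j)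
        have h2 : (n.choose k : ℝ) * (k.choose j : ℝ)
            = (n.choose j : ℝ) * (((n - j).choose (k - j) : ℕ) : ℝ) := by
          exact_mod_cast Nat.choose_mul hjk
        rw [div_pow, ← mul_div_assoc, le_div_iff₀ (pow_pos hn0 j)]
        push_cast
        calc (q.choose j : ℝ) * ((n - j).choose (k - j) : ℝ) * (n:ℝ) ^ j
            = ((q.choose j : ℝ) * (n:ℝ) ^ j) * ((n - j).choose (k - j) : ℝ) := by ring
          _ ≤ ((n.choose j : ℝ) * (q:ℝ) ^ j) * ((n - j).choose (k - j) : ℝ) :=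
              mul_le_mul_of_nonneg_right h1 (Nat.cast_nonneg _)
          _ = ((n.choose j : ℝ) * (((n - j).choose (k - j) : ℕ) : ℝ)) * (q:ℝ) ^ j := by
              push_cast; ring
          _ = (n.choose k : ℝ) * (k.choose j : ℝ) * (q:ℝ) ^ j := by rw [← h2]
    _ = (n.choose k : ℝ) * (1 + (q:ℝ)/(n:ℝ) * y) ^ k := by
        rw [add_comm (1:ℝ), add_pow, Finset.mul_sum]
        exact Finset.sum_congr rfl fun j _ => by rw [one_pow, mul_pow]; ring

open scoped Classical

theorem stmt1 {α : Type*} [Fintype α] [Nonempty α] [DecidableEq α] (P : Finset α)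
    (k : ℕ) (hk1 : 1 ≤ k) (hk2 : k ≤ Fintype.card α)
    (δ : ℝ) (hδ0 : 0 ≤ δ) (hδφ : δ ≤ (P.card : ℝ) / (Fintype.card α : ℝ)) :
    ((((Finset.univ : Finset α).powersetCard k).filter
          (fun S => ((P ∩ S).card : ℝ) < δ * k)).card : ℝ) /
        ((((Finset.univ : Finset α).powersetCard k).card : ℝ))
      ≤ Real.exp (-(2 * k * ((P.card : ℝ) / (Fintype.card α : ℝ) - δ) ^ 2)) := by
  have hn : 0 < Fintype.card α := Fintype.card_pos
  have hn0 : (0:ℝ) < (Fintype.card α : ℝ) := by exact_mod_cast hn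
  have hpn : P.card ≤ Fintype.card α := by
    simpa using Finset.card_le_univ P
  set n := Fintype.card α with hndef
  set φ : ℝ := (P.card : ℝ) / (n : ℝ) with hφdef
  set t : ℝ := φ - δ with htdef
  have ht0 : 0 ≤ t := by simp only [htdef]; linarith
  set h : ℝ := 4 * t with hhdef
  have hh0 : 0 ≤ h := by positivity
  set y : ℝ := Real.exp h - 1 with hydef
  have hy0 : 0 ≤ y := by
    have := Real.one_le_exp hh0
    simp only [hydef]; linarith
  have h1y : 1 + y = Real.exp h := by simp only [hydef]; ring
  set a : ℝ := ((n - P.card : ℕ) : ℝ) / (n : ℝ) with hadef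
  have hqcast : ((n - P.card : ℕ) : ℝ) = (n : ℝ) - (P.card : ℝ) := Nat.cast_sub hpn
  have haφ : a = 1 - φ := by
    simp only [hadef, hφdef, hqcast]
    field_simp
  have ha0 : 0 ≤ a := by
    apply div_nonneg (Nat.cast_nonneg _) hn0.le
  have ha1 : a ≤ 1 := by
    rw [div_le_one hn0, hqcast]
    have : 0 ≤ (P.card : ℝ) := Nat.cast_nonneg _
    linarith
  -- the denominator
  have hden : (((Finset.univ : Finset α).powersetCard k).card : ℝ) = (n.choose k : ℝ) := by
    rw [Finset.card_powersetCard, Finset.card_univ]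
  have hckpos : (0:ℝ) < (n.choose k : ℝ) := by
    exact_mod_cast Nat.choose_pos hk2
  set F := ((Finset.univ : Finset α).powersetCard k).filter
      (fun S => ((P ∩ S).card : ℝ) < δ * k) with hFdef
  set E : ℝ := Real.exp (h * ((k : ℝ) - δ * k)) with hEdef
  have hEpos : 0 < E := Real.exp_pos _
  -- Step 1: pointwise bound on the filter
  have step1 : ∀ S ∈ F, E ≤ (1 + y) ^ (S \ P).card := by
    intro S hS
    rw [hFdef, Finset.mem_filter] at hS
    obtain ⟨hS1, hS2⟩ := hS
    have hSk : S.card = k := (Finset.mem_powersetCard.1 hS1).2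
    have hcards : (S ∩ P).card + (S \ P).card = k := by
      rw [Finset.card_inter_add_card_sdiff, hSk]
    have hPS : ((S ∩ P).card : ℝ) < δ * k := by rwa [Finset.inter_comm] at hS2
    have hm : (k : ℝ) - δ * k ≤ ((S \ P).card : ℝ) := by
      have : ((S ∩ P).card : ℝ) + ((S \ P).card : ℝ) = (k : ℝ) := by exact_mod_cast hcards
      linarith
    rw [h1y, ← Real.exp_nat_mul]
    apply Real.exp_le_exp.2
    calc h * ((k : ℝ) - δ * k) ≤ h * ((S \ P).card : ℝ) := by
          apply mul_le_mul_of_nonneg_left hm hh0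
      _ = ((S \ P).card : ℝ) * h := by ring
  -- Step 2: sum bound
  have step2 : (F.card : ℝ) * E ≤ ∑ S ∈ (Finset.univ : Finset α).powersetCard k,
      (1 + y) ^ (S \ P).card := by
    have hsub : F ⊆ (Finset.univ : Finset α).powersetCard k := Finset.filter_subset _ _
    calc (F.card : ℝ) * E = ∑ _S ∈ F, E := by rw [Finset.sum_const, nsmul_eq_mul]
      _ ≤ ∑ S ∈ F, (1 + y) ^ (S \ P).card := Finset.sum_le_sum step1
      _ ≤ _ := by
          apply Finset.sum_le_sum_of_subset_of_nonneg hsub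
          intro S _ _
          positivity
  have step3 := mgf_bound P k hk2 hn y hy0
  -- Step 4
  have step4 : (1 + a * y) ^ k ≤ Real.exp ((k : ℝ) * (a * h + h ^ 2 / 8)) := by
    have hb : 1 + a * y ≤ Real.exp (a * h + h ^ 2 / 8) := by
      have := bern_mgf a ha0 ha1 hh0
      calc 1 + a * y = 1 - a + a * Real.exp h := by rw [hydef]; ring
        _ ≤ _ := this
    calc (1 + a * y) ^ k ≤ (Real.exp (a * h + h ^ 2 / 8)) ^ k := by
          apply pow_le_pow_left₀ (by positivity) hb
      _ = Real.exp ((k : ℝ) * (a * h + h ^ 2 / 8)) := by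
          rw [← Real.exp_nat_mul]
  have chain : (F.card : ℝ) * E ≤ (n.choose k : ℝ) * Real.exp ((k : ℝ) * (a * h + h ^ 2 / 8)) := by
    calc (F.card : ℝ) * E ≤ _ := step2
      _ ≤ (n.choose k : ℝ) * (1 + a * y) ^ k := step3
      _ ≤ _ := by
          apply mul_le_mul_of_nonneg_left step4 hckpos.le
  have hexp : (k : ℝ) * (a * h + h ^ 2 / 8) - h * ((k : ℝ) - δ * k) = -(2 * k * t ^ 2) := by
    rw [haφ, hhdef, htdef]
    ring
  have final : (F.card : ℝ) ≤ (n.choose k : ℝ) * Real.exp (-(2 * k * t ^ 2)) := by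
    rw [← hexp, Real.exp_sub]
    rw [← mul_div_assoc]
    rw [le_div_iff₀ hEpos]
    exact chain
  rw [hden, div_le_iff₀ hckpos]
  calc (F.card : ℝ) ≤ (n.choose k : ℝ) * Real.exp (-(2 * k * t ^ 2)) := final
    _ = Real.exp (-(2 * k * (φ - δ) ^ 2)) * (n.choose k : ℝ) := by rw [htdef]; ring
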